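/- arXiv:2404.13339 — 2 statements merged into one kernel-verified Lean document; each statement's English description precedes it below -/
import Mathlib

section
/- For t in the open cube (0,1)^J, the unique solution β̃_t of L_t u = (1/n) X_t^T y is a differentiable function of t, and its partial derivative with respect to t_j equals L_t^{-1}[E_j − E_j Z T_t L_t^{-1} T_t − T_t Z E_j L_t^{-1} T_t] (X^T y / n), where Z = X^T X / n − I and E_j is the diagonal matrix selecting the coordinates of group j. -/
open Matrix

/-- Group-structured diagonal matrix `T_t` repeating each `t j` over group `j`. -/
noncomputable def Tmat {p J : ℕ} (g : Fin p → Fin J) (t : Fin J → ℝ) :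
    Matrix (Fin p) (Fin p) ℝ :=
  Matrix.diagonal fun i => t (g i)

/-- `Z = (1/n) Xᵀ X − I`. -/
noncomputable def Zmat {n p : ℕ} (X : Matrix (Fin n) (Fin p) ℝ) :
    Matrix (Fin p) (Fin p) ℝ :=
  ((1 : ℝ) / n) • (Xᵀ * X) - 1

/-- `L_t = T_t Z T_t + I`. -/
noncomputable def Lmat {n p J : ℕ} (X : Matrix (Fin n) (Fin p) ℝ)
    (g : Fin p → Fin J) (t : Fin J → ℝ) : Matrix (Fin p) (Fin p) ℝ :=
  Tmat g t * Zmat X * Tmat g t + 1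

/-- `E_j`: the diagonal matrix selecting the coordinates of group `j`. -/
noncomputable def Emat {p J : ℕ} (g : Fin p → Fin J) (j : Fin J) :
    Matrix (Fin p) (Fin p) ℝ :=
  Matrix.diagonal fun i => if g i = j then (1 : ℝ) else 0

/-- `β̃_t = L_t⁻¹ ((1/n) X_tᵀ y)` with `X_t = X T_t`. -/
noncomputable def betaT {n p J : ℕ} (X : Matrix (Fin n) (Fin p) ℝ)
    (g : Fin p → Fin J) (y : Fin n → ℝ) (t : Fin J → ℝ) : Fin p → ℝ :=
  (Lmat X g t)⁻¹.mulVec (((1 : ℝ) / n) • ((X * Tmat g t)ᵀ.mulVec y))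

/- ### Auxiliary material -/

attribute [local instance] Matrix.linftyOpNormedRing Matrix.linftyOpNormedAlgebra

noncomputable local instance (p : ℕ) : CompleteSpace (Matrix (Fin p) (Fin p) ℝ) :=
  FiniteDimensional.complete ℝ _

lemma Tmat_update {p J : ℕ} (g : Fin p → Fin J) (t : Fin J → ℝ) (j : Fin J) (x : ℝ) :
    Tmat g (Function.update t j x) = (Tmat g t - t j • Emat g j) + x • Emat g j := by
  ext i k
  simp only [Tmat, Emat, Matrix.add_apply, Matrix.sub_apply, Matrix.smul_apply,
    Matrix.diagonal_apply, Function.update_apply, smul_eq_mul]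
  split_ifs with h1 h2 <;> simp_all

lemma Tmat_add {p J : ℕ} (g : Fin p → Fin J) (s t : Fin J → ℝ) :
    Tmat g (s + t) = Tmat g s + Tmat g t := by
  ext i k
  simp only [Tmat, Matrix.add_apply, Matrix.diagonal_apply, Pi.add_apply]
  split_ifs <;> simp

lemma Tmat_smul {p J : ℕ} (g : Fin p → Fin J) (c : ℝ) (t : Fin J → ℝ) :
    Tmat g (c • t) = c • Tmat g t := by
  ext i k
  simp only [Tmat, Matrix.smul_apply, Matrix.diagonal_apply, Pi.smul_apply, smul_eq_mul]
  split_ifs <;> simp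

/-- `t ↦ T_t` as a continuous linear map. -/
noncomputable def TmatCLM {p J : ℕ} (g : Fin p → Fin J) :
    (Fin J → ℝ) →L[ℝ] Matrix (Fin p) (Fin p) ℝ :=
  LinearMap.toContinuousLinearMap
    { toFun := fun t => Tmat g t
      map_add' := Tmat_add g
      map_smul' := fun c t => Tmat_smul g c t }

@[simp] lemma TmatCLM_apply {p J : ℕ} (g : Fin p → Fin J) (t : Fin J → ℝ) :
    TmatCLM g t = Tmat g t := rfl

/-- `A ↦ A *ᵥ w` as a continuous linear map. -/
noncomputable def mulVecR {p : ℕ} (w : Fin p → ℝ) :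
    Matrix (Fin p) (Fin p) ℝ →L[ℝ] (Fin p → ℝ) :=
  LinearMap.toContinuousLinearMap
    { toFun := fun A => A *ᵥ w
      map_add' := fun A B => Matrix.add_mulVec A B w
      map_smul' := fun c A => smul_mulVec c A w }

@[simp] lemma mulVecR_apply {p : ℕ} (w : Fin p → ℝ) (A : Matrix (Fin p) (Fin p) ℝ) :
    mulVecR w A = A *ᵥ w := rfl

/-- `mulVec` as a continuous bilinear map. -/
noncomputable def mulVecB (p : ℕ) :
    Matrix (Fin p) (Fin p) ℝ →L[ℝ] (Fin p → ℝ) →L[ℝ] (Fin p → ℝ) :=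
  LinearMap.toContinuousLinearMap
    { toFun := fun A => LinearMap.toContinuousLinearMap A.mulVecLin
      map_add' := by
        intro A B; ext v i
        simp [Matrix.add_mulVec]
      map_smul' := by
        intro c A; ext v i
        simp [smul_mulVec] }

@[simp] lemma mulVecB_apply {p : ℕ} (A : Matrix (Fin p) (Fin p) ℝ) (v : Fin p → ℝ) :
    mulVecB p A v = A *ᵥ v := rfl

lemma Lmat_decomp {n p J : ℕ} (hn : 0 < n) (X : Matrix (Fin n) (Fin p) ℝ)
    (g : Fin p → Fin J) (t : Fin J → ℝ) :
    Lmat X g t = (Real.sqrt (1/n) • (X * Tmat g t))ᴴ * (Real.sqrt (1/n) • (X * Tmat g t))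
      + Matrix.diagonal (fun i => 1 - t (g i) ^ 2) := by
  have hs : Real.sqrt (1/n) * Real.sqrt (1/n) = 1/n :=
    Real.mul_self_sqrt (by positivity)
  have hT : (Tmat g t)ᵀ = Tmat g t := diagonal_transpose _
  rw [conjTranspose_eq_transpose_of_trivial, transpose_smul, transpose_mul, hT]
  rw [Matrix.smul_mul, Matrix.mul_smul, smul_smul, hs]
  have h2 : Tmat g t * Tmat g t = Matrix.diagonal (fun i => t (g i) ^ 2) := by
    rw [Tmat, diagonal_mul_diagonal]
    congr 1; funext i; ring
  have h3 : Matrix.diagonal (fun i : Fin p => 1 - t (g i) ^ 2)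
      = 1 - Tmat g t * Tmat g t := by
    rw [h2, ← diagonal_one, diagonal_sub]
  rw [h3, Lmat, Zmat]
  simp only [Matrix.mul_sub, Matrix.sub_mul, Matrix.mul_smul, Matrix.smul_mul,
    Matrix.mul_one, Matrix.one_mul]
  rw [← Matrix.mul_assoc (Tmat g t) Xᵀ X, ← Matrix.mul_assoc (Tmat g t * Xᵀ) X (Tmat g t)]
  abel

lemma Lmat_posDef {n p J : ℕ} (hn : 0 < n) (X : Matrix (Fin n) (Fin p) ℝ)
    (g : Fin p → Fin J) (t : Fin J → ℝ) (ht : ∀ j, t j ∈ Set.Ioo (0 : ℝ) 1) :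
    (Lmat X g t).PosDef := by
  rw [Lmat_decomp hn]
  exact Matrix.PosDef.posSemidef_add (posSemidef_conjTranspose_mul_self _)
    (Matrix.PosDef.diagonal fun i => by nlinarith [(ht (g i)).1, (ht (g i)).2])

lemma betaT_eq {n p J : ℕ} (X : Matrix (Fin n) (Fin p) ℝ)
    (g : Fin p → Fin J) (y : Fin n → ℝ) (s : Fin J → ℝ) :
    betaT X g y s
      = ((1 : ℝ) / n) • mulVecB p (Ring.inverse (Lmat X g s)) (Tmat g s *ᵥ (Xᵀ *ᵥ y)) := by
  rw [betaT, Matrix.nonsing_inv_eq_ringInverse]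
  rw [transpose_mul, show (Tmat g s)ᵀ = Tmat g s from diagonal_transpose _,
    ← Matrix.mulVec_mulVec, Matrix.mulVec_smul, mulVecB_apply]

/-- For `t` in the open cube `(0,1)^J`, the unique solution `β̃_t` of
`L_t u = (1/n) X_tᵀ y` is a differentiable function of `t`, and its partial derivative
with respect to `t_j` equals
`L_t⁻¹ [E_j − E_j Z T_t L_t⁻¹ T_t − T_t Z E_j L_t⁻¹ T_t] (Xᵀ y / n)`. -/
theorem betaT_hasDerivAt (n p J : ℕ) (hn : 0 < n)
    (X : Matrix (Fin n) (Fin p) ℝ) (g : Fin p → Fin J) (y : Fin n → ℝ)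
    (t : Fin J → ℝ) (ht : ∀ j, t j ∈ Set.Ioo (0 : ℝ) 1) :
    DifferentiableAt ℝ (fun t' : Fin J → ℝ => betaT X g y t') t ∧
    ∀ j : Fin J,
      HasDerivAt (fun x : ℝ => betaT X g y (Function.update t j x))
        ((Lmat X g t)⁻¹.mulVec
          ((Emat g j -
              Emat g j * Zmat X * Tmat g t * (Lmat X g t)⁻¹ * Tmat g t -
              Tmat g t * Zmat X * Emat g j * (Lmat X g t)⁻¹ * Tmat g t).mulVec
            (((1 : ℝ) / n) • (Xᵀ.mulVec y))))
        (t j) := by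
  have hpos : (Lmat X g t).PosDef := Lmat_posDef hn X g t ht
  obtain ⟨u, hu⟩ := hpos.isUnit
  set c : ℝ := (1 : ℝ) / n with hc
  set w : Fin p → ℝ := Xᵀ *ᵥ y with hw
  have hNinv : (Lmat X g t)⁻¹ = (↑u⁻¹ : Matrix (Fin p) (Fin p) ℝ) := by
    rw [Matrix.nonsing_inv_eq_ringInverse, ← hu, Ring.inverse_unit]
  -- differentiability in t'
  have hTdiff : DifferentiableAt ℝ (fun t' : Fin J → ℝ => Tmat g t') t :=
    (TmatCLM (p := p) g).differentiableAt
  have hLdiff : DifferentiableAt ℝ (fun t' : Fin J → ℝ => Lmat X g t') t := by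
    simp only [Lmat]
    exact ((hTdiff.mul_const (Zmat X)).mul hTdiff).add_const 1
  have hNdiff : DifferentiableAt ℝ (fun t' : Fin J → ℝ => Ring.inverse (Lmat X g t')) t :=
    by have := (differentiableAt_inverse (𝕜 := ℝ) (hu ▸ u.isUnit)).comp t hLdiff; exact this
  constructor
  · have hrw : (fun t' : Fin J → ℝ => betaT X g y t')
        = fun t' => c • mulVecB p (Ring.inverse (Lmat X g t')) (Tmat g t' *ᵥ w) :=
      funext fun s => betaT_eq X g y s
    rw [hrw]
    have h1 : DifferentiableAt ℝ
        (fun t' : Fin J → ℝ => mulVecB p (Ring.inverse (Lmat X g t'))) t :=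
      (mulVecB p).differentiableAt.comp t hNdiff
    have h2 : DifferentiableAt ℝ (fun t' : Fin J → ℝ => Tmat g t' *ᵥ w) t := by
      have := (mulVecR w).differentiableAt.comp t hTdiff
      simpa using this
    exact (h1.clm_apply h2).const_smul c
  · intro j
    -- derivative of T
    have hTd : HasDerivAt (fun x : ℝ => Tmat g (Function.update t j x)) (Emat g j) (t j) := by
      have hfun : (fun x : ℝ => Tmat g (Function.update t j x))
          = fun x => (Tmat g t - t j • Emat g j) + x • Emat g j :=
        funext fun x => Tmat_update g t j x
      rw [hfun]
      have h := ((hasDerivAt_id (t j)).smul_const (Emat g j)).const_add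
        (Tmat g t - t j • Emat g j)
      rw [one_smul] at h; exact h
    -- derivative of L
    have hLd : HasDerivAt (fun x : ℝ => Lmat X g (Function.update t j x))
        (Emat g j * Zmat X * Tmat g t + Tmat g t * Zmat X * Emat g j) (t j) := by
      have h1 := ((hTd.mul_const (Zmat X)).mul hTd).add_const
        (1 : Matrix (Fin p) (Fin p) ℝ)
      simp only [Function.update_eq_self] at h1
      exact h1
    set L' : Matrix (Fin p) (Fin p) ℝ :=
      Emat g j * Zmat X * Tmat g t + Tmat g t * Zmat X * Emat g j with hL'
    -- derivative of Ring.inverse L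
    have hNd : HasDerivAt (fun x : ℝ => Ring.inverse (Lmat X g (Function.update t j x)))
        (-((Lmat X g t)⁻¹ * L' * (Lmat X g t)⁻¹)) (t j) := by
      have hpt : Lmat X g (Function.update t j (t j)) = (↑u : Matrix (Fin p) (Fin p) ℝ) := by
        rw [Function.update_eq_self, hu]
      have hF := hasFDerivAt_ringInverse (𝕜 := ℝ) u
      rw [← hpt] at hF
      have h := hF.comp_hasDerivAt (t j) hLd
      rw [hNinv]
      exact h
    -- derivative of the full expression
    have hBc : HasDerivAt
        (fun x : ℝ => mulVecB p (Ring.inverse (Lmat X g (Function.update t j x))))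
        (mulVecB p (-((Lmat X g t)⁻¹ * L' * (Lmat X g t)⁻¹))) (t j) :=
      (mulVecB p).hasFDerivAt.comp_hasDerivAt (t j) hNd
    have hG : HasDerivAt (fun x : ℝ => Tmat g (Function.update t j x) *ᵥ w)
        (Emat g j *ᵥ w) (t j) := by
      have := (mulVecR w).hasFDerivAt.comp_hasDerivAt (t j) hTd
      exact this
    have hH := (hBc.clm_apply hG).const_smul c
    have hfun : (fun x : ℝ => betaT X g y (Function.update t j x))
        = fun x : ℝ => c • mulVecB p (Ring.inverse (Lmat X g (Function.update t j x)))
            (Tmat g (Function.update t j x) *ᵥ w) :=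
      funext fun x => betaT_eq X g y _
    rw [hfun]
    refine hH.congr_deriv (Eq.symm ?_)
    -- identify the derivative values
    simp only [Function.update_eq_self, mulVecB_apply, ← Matrix.nonsing_inv_eq_ringInverse]
    set N : Matrix (Fin p) (Fin p) ℝ := (Lmat X g t)⁻¹
    have hmat : N * (Emat g j - Emat g j * Zmat X * Tmat g t * N * Tmat g t
          - Tmat g t * Zmat X * Emat g j * N * Tmat g t)
        = -(N * L' * N * Tmat g t) + N * Emat g j := by
      rw [hL']; noncomm_ring
    calc N *ᵥ ((Emat g j - Emat g j * Zmat X * Tmat g t * N * Tmat g t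
          - Tmat g t * Zmat X * Emat g j * N * Tmat g t) *ᵥ (c • w))
        = c • ((N * (Emat g j - Emat g j * Zmat X * Tmat g t * N * Tmat g t
          - Tmat g t * Zmat X * Emat g j * N * Tmat g t)) *ᵥ w) := by
          rw [Matrix.mulVec_mulVec, Matrix.mulVec_smul]
      _ = c • ((-(N * L' * N * Tmat g t)) *ᵥ w + (N * Emat g j) *ᵥ w) := by
          rw [hmat, Matrix.add_mulVec]
      _ = c • ((-(N * L' * N)) *ᵥ (Tmat g t *ᵥ w) + N *ᵥ (Emat g j *ᵥ w)) := by
          simp only [Matrix.mulVec_mulVec, Matrix.neg_mulVec, Matrix.neg_mul, Matrix.mul_assoc]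
end

section
/- For t in the open cube (0,1)^J, the objective f_λ(t) = (1/n)‖y − X_t β̃_t‖₂² + λ Σ_j √(p_j) t_j has gradient with j-th coordinate 2[β̃_{t,j}^T (a_{t,j} − d_{t,j}) − b_{t,j}^T c_{t,j}] + λ√(p_j), where a_t = (X^T X/n) η_t − X^T y/n, b_t = a_t − η_t, c_t = L_t^{-1}(the vector with group-j block t_j · a_{t,j}), d_t = Z·(the vector with group-j block t_j · c_{t,j}), η_t = T_t β̃_t, and subscript j denotes the block of coordinates in group j. -/
open Matrix Finset

/-- `η_t = T_t β̃_t`. -/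
noncomputable def etaT {n p J : ℕ} (X : Matrix (Fin n) (Fin p) ℝ)
    (g : Fin p → Fin J) (y : Fin n → ℝ) (t : Fin J → ℝ) : Fin p → ℝ :=
  (Tmat g t).mulVec (betaT X g y t)

/-- `a_t = (Xᵀ X / n) η_t − Xᵀ y / n`. -/
noncomputable def aT {n p J : ℕ} (X : Matrix (Fin n) (Fin p) ℝ)
    (g : Fin p → Fin J) (y : Fin n → ℝ) (t : Fin J → ℝ) : Fin p → ℝ :=
  ((1 : ℝ) / n) • (Xᵀ * X).mulVec (etaT X g y t) - ((1 : ℝ) / n) • Xᵀ.mulVec y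

/-- `b_t = a_t − η_t`. -/
noncomputable def bT {n p J : ℕ} (X : Matrix (Fin n) (Fin p) ℝ)
    (g : Fin p → Fin J) (y : Fin n → ℝ) (t : Fin J → ℝ) : Fin p → ℝ :=
  aT X g y t - etaT X g y t

/-- `c_t = L_t⁻¹ (t ⊙ a_t)`, where `t ⊙ v` has group-`j` block `t_j v_j`. -/
noncomputable def cT {n p J : ℕ} (X : Matrix (Fin n) (Fin p) ℝ)
    (g : Fin p → Fin J) (y : Fin n → ℝ) (t : Fin J → ℝ) : Fin p → ℝ :=
  (Lmat X g t)⁻¹.mulVec fun i => t (g i) * aT X g y t i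

/-- `d_t = Z (t ⊙ c_t)`. -/
noncomputable def dT {n p J : ℕ} (X : Matrix (Fin n) (Fin p) ℝ)
    (g : Fin p → Fin J) (y : Fin n → ℝ) (t : Fin J → ℝ) : Fin p → ℝ :=
  (Zmat X).mulVec fun i => t (g i) * cT X g y t i


section Aux
open Filter

lemma differentiableAt_det_entries {p : ℕ} (A : ℝ → Matrix (Fin p) (Fin p) ℝ) (x₀ : ℝ)
    (h : ∀ i k, DifferentiableAt ℝ (fun x => A x i k) x₀) :
    DifferentiableAt ℝ (fun x => (A x).det) x₀ := by
  simp only [Matrix.det_apply]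
  apply DifferentiableAt.fun_sum
  intro σ _
  have hp : DifferentiableAt ℝ (fun x => ∏ i, A x (σ i) i) x₀ :=
    DifferentiableAt.fun_finsetProd (fun i _ => h (σ i) i)
  simpa [Units.smul_def, zsmul_eq_mul] using hp.const_mul ((Equiv.Perm.sign σ : ℤ) : ℝ)

lemma differentiableAt_inv_entry {p : ℕ} (A : ℝ → Matrix (Fin p) (Fin p) ℝ) (x₀ : ℝ)
    (h : ∀ i k, DifferentiableAt ℝ (fun x => A x i k) x₀)
    (hdet : (A x₀).det ≠ 0) (i k : Fin p) :
    DifferentiableAt ℝ (fun x => (A x)⁻¹ i k) x₀ := by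
  have hadj : DifferentiableAt ℝ (fun x => (A x).adjugate i k) x₀ := by
    simp only [Matrix.adjugate_apply]
    apply differentiableAt_det_entries
    intro i' k'
    by_cases hik : i' = k
    · simp [Matrix.updateRow_apply, hik]
    · simpa [Matrix.updateRow_apply, hik] using h i' k'
  have hd : DifferentiableAt ℝ (fun x => ((A x).det)⁻¹) x₀ :=
    (differentiableAt_det_entries A x₀ h).inv hdet
  have := hd.mul hadj
  refine this.congr_of_eventuallyEq (Filter.Eventually.of_forall fun x => ?_)
  simp [Matrix.inv_def, Ring.inverse_eq_inv', Matrix.smul_apply, smul_eq_mul]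

lemma hasDerivAt_inv_entry {p : ℕ} (A : ℝ → Matrix (Fin p) (Fin p) ℝ)
    (A' : Matrix (Fin p) (Fin p) ℝ) (x₀ : ℝ)
    (h : ∀ i k, HasDerivAt (fun x => A x i k) (A' i k) x₀)
    (hdet : (A x₀).det ≠ 0) (i k : Fin p) :
    HasDerivAt (fun x => (A x)⁻¹ i k) ((-((A x₀)⁻¹ * A' * (A x₀)⁻¹)) i k) x₀ := by
  have hdiff : ∀ i k, DifferentiableAt ℝ (fun x => A x i k) x₀ :=
    fun i k => (h i k).differentiableAt
  set M : Matrix (Fin p) (Fin p) ℝ :=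
    Matrix.of (fun i k => deriv (fun x => (A x)⁻¹ i k) x₀) with hMdef
  have hM : ∀ i k, HasDerivAt (fun x => (A x)⁻¹ i k) (M i k) x₀ :=
    fun i k => (differentiableAt_inv_entry A x₀ hdiff hdet i k).hasDerivAt
  have hcont : ContinuousAt (fun x => (A x).det) x₀ :=
    (differentiableAt_det_entries A x₀ hdiff).continuousAt
  have hev : ∀ᶠ x in nhds x₀, A x * (A x)⁻¹ = 1 := by
    filter_upwards [hcont.eventually_ne hdet] with x hx
    exact Matrix.mul_nonsing_inv _ (isUnit_iff_ne_zero.2 hx)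
  have hzero : ∀ i k, (A' * (A x₀)⁻¹ + A x₀ * M) i k = 0 := by
    intro i k
    have h1 : HasDerivAt (fun x => ∑ l, A x i l * (A x)⁻¹ l k)
        (∑ l, (A' i l * (A x₀)⁻¹ l k + A x₀ i l * M l k)) x₀ :=
      HasDerivAt.fun_sum fun l _ => (h i l).fun_mul (hM l k)
    have h2 : (fun x => ∑ l, A x i l * (A x)⁻¹ l k) =ᶠ[nhds x₀]
        (fun _ => (1 : Matrix (Fin p) (Fin p) ℝ) i k) := by
      filter_upwards [hev] with x hx
      rw [← hx, Matrix.mul_apply]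
    have h3 : HasDerivAt (fun _ : ℝ => (1 : Matrix (Fin p) (Fin p) ℝ) i k)
        (∑ l, (A' i l * (A x₀)⁻¹ l k + A x₀ i l * M l k)) x₀ :=
      h1.congr_of_eventuallyEq h2.symm
    have h4 := h3.unique (hasDerivAt_const _ _)
    simp only [Matrix.add_apply, Matrix.mul_apply, ← Finset.sum_add_distrib]
    exact h4
  have hmat : A' * (A x₀)⁻¹ + A x₀ * M = 0 := by
    ext i k; exact hzero i k
  have hAM : A x₀ * M = -(A' * (A x₀)⁻¹) := by
    rw [← neg_eq_iff_add_eq_zero] at hmat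
    linear_combination (norm := abel) -hmat
  have hMeq : M = -((A x₀)⁻¹ * A' * (A x₀)⁻¹) := by
    have h5 : (A x₀)⁻¹ * (A x₀ * M) = (A x₀)⁻¹ * -(A' * (A x₀)⁻¹) := by rw [hAM]
    rw [← Matrix.mul_assoc, Matrix.nonsing_inv_mul _ (isUnit_iff_ne_zero.2 hdet),
      Matrix.one_mul, Matrix.mul_neg] at h5
    rw [h5, Matrix.mul_assoc]
  rw [← hMeq]
  exact hM i k

lemma diag_dot_swap {p : ℕ} (d v w : Fin p → ℝ) :
    v ⬝ᵥ (Matrix.diagonal d).mulVec w = (fun i => d i * v i) ⬝ᵥ w := by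
  simp only [dotProduct, Matrix.mulVec_diagonal]
  exact Finset.sum_congr rfl fun i _ => by ring

lemma transpose_dot_swap {n p : ℕ} (M : Matrix (Fin n) (Fin p) ℝ)
    (v : Fin p → ℝ) (w : Fin n → ℝ) :
    v ⬝ᵥ Mᵀ.mulVec w = (M.mulVec v) ⬝ᵥ w := by
  rw [dotProduct_mulVec, Matrix.vecMul_transpose]

lemma symm_dot_swap {p : ℕ} (M : Matrix (Fin p) (Fin p) ℝ) (hM : Mᵀ = M)
    (v w : Fin p → ℝ) : v ⬝ᵥ M.mulVec w = (M.mulVec v) ⬝ᵥ w := by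
  conv_lhs => rw [← hM]
  rw [transpose_dot_swap]

lemma quadform_Lmat {n p J : ℕ} (X : Matrix (Fin n) (Fin p) ℝ)
    (g : Fin p → Fin J) (t : Fin J → ℝ) (v : Fin p → ℝ) :
    v ⬝ᵥ (Lmat X g t).mulVec v =
      ((1 : ℝ) / n) * ((X.mulVec fun i => t (g i) * v i) ⬝ᵥ
          (X.mulVec fun i => t (g i) * v i)) +
        ∑ i, (1 - t (g i) ^ 2) * v i ^ 2 := by
  set u : Fin p → ℝ := fun i => t (g i) * v i with hu
  have h1 : (Lmat X g t).mulVec v =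
      (Tmat g t).mulVec ((Zmat X).mulVec ((Tmat g t).mulVec v)) + v := by
    rw [Lmat, Matrix.add_mulVec, Matrix.one_mulVec, Matrix.mulVec_mulVec,
      Matrix.mulVec_mulVec]
  have hTv : (Tmat g t).mulVec v = u := by
    ext i; simp [Tmat, Matrix.mulVec_diagonal, hu]
  rw [h1, dotProduct_add, hTv, Tmat, diag_dot_swap]
  have h2 : (fun i => t (g i) * v i) ⬝ᵥ (Zmat X).mulVec u
      = ((1 : ℝ) / n) * ((X.mulVec u) ⬝ᵥ (X.mulVec u)) - u ⬝ᵥ u := by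
    rw [← hu, Zmat, Matrix.sub_mulVec, Matrix.smul_mulVec,
      Matrix.one_mulVec, dotProduct_sub, dotProduct_smul]
    rw [← Matrix.mulVec_mulVec, transpose_dot_swap]
    simp [smul_eq_mul]
  rw [h2]
  have h3 : v ⬝ᵥ v - u ⬝ᵥ u = ∑ i, (1 - t (g i) ^ 2) * v i ^ 2 := by
    simp only [dotProduct, hu, ← Finset.sum_sub_distrib]
    exact Finset.sum_congr rfl fun i _ => by ring
  rw [← h3]; ring

lemma det_Lmat_ne_zero {n p J : ℕ} (X : Matrix (Fin n) (Fin p) ℝ)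
    (g : Fin p → Fin J) (t : Fin J → ℝ) (ht : ∀ j, t j ∈ Set.Ioo (0 : ℝ) 1) :
    (Lmat X g t).det ≠ 0 := by
  intro h0
  obtain ⟨v, hv, hLv⟩ := (Matrix.exists_mulVec_eq_zero_iff).mpr h0
  have hq := quadform_Lmat X g t v
  rw [hLv, dotProduct_zero] at hq
  have h1 : (0 : ℝ) ≤ ((1 : ℝ) / n) * ((X.mulVec fun i => t (g i) * v i) ⬝ᵥ
      (X.mulVec fun i => t (g i) * v i)) := by
    apply mul_nonneg (by positivity)
    simp only [dotProduct]
    exact Finset.sum_nonneg fun a _ => mul_self_nonneg _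
  have h2 : (0 : ℝ) < ∑ i, (1 - t (g i) ^ 2) * v i ^ 2 := by
    have hvi : ∃ i, v i ≠ 0 := by
      by_contra hc
      push_neg at hc
      exact hv (funext fun i => hc i)
    obtain ⟨i₀, hi₀⟩ := hvi
    apply Finset.sum_pos'
    · intro i _
      have h := ht (g i)
      have h2 : t (g i) ^ 2 < 1 := by nlinarith [h.1, h.2]
      exact mul_nonneg (by linarith) (sq_nonneg _)
    · refine ⟨i₀, Finset.mem_univ _, ?_⟩
      have h := ht (g i₀)
      have h1 : t (g i₀) ^ 2 < 1 := by nlinarith [h.1, h.2]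
      have h2 : 0 < v i₀ ^ 2 := by positivity
      nlinarith
  linarith

end Aux

/-- For `t` in the open cube `(0,1)^J`, the objective
`f_λ(t) = (1/n)‖y − X_t β̃_t‖₂² + λ Σ_j √(p_j) t_j` has gradient with `j`-th coordinate
`2[β̃_{t,j}ᵀ (a_{t,j} − d_{t,j}) − b_{t,j}ᵀ c_{t,j}] + λ√(p_j)`, the block inner products
being sums over the indices of group `j` and `p_j` the size of group `j`. -/

theorem objective_gradient_formula (n p J : ℕ) (hn : 0 < n) (lam : ℝ) (hlam : 0 < lam)
    (X : Matrix (Fin n) (Fin p) ℝ) (g : Fin p → Fin J) (y : Fin n → ℝ)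
    (t : Fin J → ℝ) (ht : ∀ j, t j ∈ Set.Ioo (0 : ℝ) 1) (j : Fin J) :
    HasDerivAt
      (fun x : ℝ =>
        ((1 : ℝ) / n) *
            ∑ a, (y a - (X * Tmat g (Function.update t j x)).mulVec
                (betaT X g y (Function.update t j x)) a) ^ 2 +
          lam * ∑ j' : Fin J,
            Real.sqrt ((univ.filter fun i : Fin p => g i = j').card) *
              Function.update t j x j')
      (2 * ((∑ i ∈ univ.filter fun i : Fin p => g i = j,
              betaT X g y t i * (aT X g y t i - dT X g y t i)) -
            ∑ i ∈ univ.filter fun i : Fin p => g i = j,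
              bT X g y t i * cT X g y t i) +
        lam * Real.sqrt ((univ.filter fun i : Fin p => g i = j).card))
      (t j) := by
  classical
  have hupd : Function.update t j (t j) = t := Function.update_eq_self j t
  set e : Fin p → ℝ := fun i => if g i = j then 1 else 0 with he
  set w : Fin p → ℝ := Xᵀ.mulVec y with hw
  set Z : Matrix (Fin p) (Fin p) ℝ := Zmat X with hZ
  set Inv : Matrix (Fin p) (Fin p) ℝ := (Lmat X g t)⁻¹ with hInv
  set Lp : Matrix (Fin p) (Fin p) ℝ :=
    Matrix.of (fun i k => e i * Z i k * t (g k) + t (g i) * Z i k * e k) with hLp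
  set v₀ : Fin p → ℝ := ((1 : ℝ) / n) • ((X * Tmat g t)ᵀ.mulVec y) with hv₀
  set v1 : Fin p → ℝ := fun l => ((1 : ℝ) / n) * (e l * w l) with hv1
  set Mder : Matrix (Fin p) (Fin p) ℝ := -(Inv * Lp * Inv) with hMder
  set β : Fin p → ℝ := betaT X g y t with hβd
  set β' : Fin p → ℝ := Mder.mulVec v₀ + Inv.mulVec v1 with hβ'd
  have hdet : (Lmat X g t).det ≠ 0 := det_Lmat_ne_zero X g t ht
  -- derivative of the updated coordinate
  have hu : ∀ i : Fin p, HasDerivAt (fun x => Function.update t j x (g i)) (e i) (t j) := by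
    intro i
    by_cases h : g i = j
    · simp only [he, h, if_pos rfl]
      have heq : (fun x => Function.update t j x (g i)) = fun x => x := by
        funext x; rw [h, Function.update_self]
      simp only [Function.update_self, if_true]; exact hasDerivAt_id (t j)
    · simp only [he, if_neg h]
      have : (fun x => Function.update t j x (g i)) = fun _ => t (g i) := by
        funext x; rw [Function.update_of_ne h]
      rw [this]; exact hasDerivAt_const _ _
  -- entries of L
  have hLapp : ∀ (u : Fin J → ℝ) (i k : Fin p), Lmat X g u i k =
      u (g i) * Zmat X i k * u (g k) + (if i = k then (1 : ℝ) else 0) := by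
    intro u i k
    simp [Lmat, Tmat, Matrix.one_apply, Matrix.add_apply]
  have hLent : ∀ i k, HasDerivAt (fun x => Lmat X g (Function.update t j x) i k)
      (Lp i k) (t j) := by
    intro i k
    have h1 := (((hu i).mul_const (Zmat X i k)).fun_mul (hu k)).add_const
      (if i = k then (1 : ℝ) else 0)
    have h2 : (fun x => Function.update t j x (g i) * Zmat X i k *
        Function.update t j x (g k) + (if i = k then (1 : ℝ) else 0)) =
        fun x => Lmat X g (Function.update t j x) i k := by
      funext x; rw [hLapp]
    rw [h2] at h1
    refine h1.congr_deriv ?_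
    simp only [hLp, Matrix.of_apply, hupd, hZ]
  -- inverse entries
  have hInvEnt : ∀ i k, HasDerivAt
      (fun x => (Lmat X g (Function.update t j x))⁻¹ i k) (Mder i k) (t j) := by
    intro i k
    have := hasDerivAt_inv_entry (fun x => Lmat X g (Function.update t j x)) Lp (t j)
      hLent (by simpa [hupd] using hdet) i k
    simpa [hupd, hMder, hInv] using this
  -- the linear part (1/n) (X T)ᵀ y
  have hXT : ∀ u : Fin J → ℝ, (X * Tmat g u)ᵀ.mulVec y =
      fun l => u (g l) * w l := by
    intro u
    funext l
    rw [Matrix.transpose_mul, ← Matrix.mulVec_mulVec]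
    simp [Tmat, Matrix.diagonal_transpose, Matrix.mulVec_diagonal, hw]
  have hv' : ∀ l : Fin p, HasDerivAt
      (fun x => (((1 : ℝ) / n) • ((X * Tmat g (Function.update t j x))ᵀ.mulVec y)) l)
      (v1 l) (t j) := by
    intro l
    have h1 := ((hu l).mul_const (w l)).const_mul ((1 : ℝ) / n)
    refine h1.congr_of_eventuallyEq (Filter.Eventually.of_forall fun x => ?_)
    simp only [hXT, Pi.smul_apply, smul_eq_mul]
  -- derivative of β coordinates
  have hβ : ∀ i, HasDerivAt (fun x => betaT X g y (Function.update t j x) i)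
      (β' i) (t j) := by
    intro i
    have h1 : HasDerivAt (fun x => ∑ l, (Lmat X g (Function.update t j x))⁻¹ i l *
        (((1 : ℝ) / n) • ((X * Tmat g (Function.update t j x))ᵀ.mulVec y)) l)
        (∑ l, (Mder i l * v₀ l + Inv i l * v1 l)) (t j) := by
      apply HasDerivAt.fun_sum
      intro l _
      have h2 := (hInvEnt i l).fun_mul (hv' l)
      simpa [hupd, hInv, hv₀] using h2
    have h3 : (fun x => ∑ l, (Lmat X g (Function.update t j x))⁻¹ i l *
        (((1 : ℝ) / n) • ((X * Tmat g (Function.update t j x))ᵀ.mulVec y)) l) =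
        fun x => betaT X g y (Function.update t j x) i := by
      funext x
      rw [betaT]
      simp [Matrix.mulVec, dotProduct]
    rw [h3] at h1
    convert h1 using 1
    simp [hβ'd, Matrix.mulVec, dotProduct, Finset.sum_add_distrib]
  -- residual entries
  have hXTv : ∀ (u : Fin J → ℝ) (z : Fin p → ℝ) (a : Fin n),
      (X * Tmat g u).mulVec z a = ∑ i, X a i * (u (g i) * z i) := by
    intro u z a
    rw [← Matrix.mulVec_mulVec]
    have hTz : Tmat g u *ᵥ z = fun i => u (g i) * z i := by
      funext i; simp [Tmat, Matrix.mulVec_diagonal]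
    rw [hTz]
    simp [Matrix.mulVec, dotProduct]
  set r' : Fin n → ℝ := fun a => -(∑ i, X a i * (e i * β i + t (g i) * β' i)) with hr'
  have hres : ∀ a : Fin n, HasDerivAt (fun x => y a -
      (X * Tmat g (Function.update t j x)).mulVec
        (betaT X g y (Function.update t j x)) a) (r' a) (t j) := by
    intro a
    have h1 : HasDerivAt (fun x => ∑ i, X a i *
        (Function.update t j x (g i) * betaT X g y (Function.update t j x) i))
        (∑ i, X a i * (e i * β i + t (g i) * β' i)) (t j) := by
      apply HasDerivAt.fun_sum
      intro i _
      have h2 := ((hu i).mul (hβ i)).const_mul (X a i)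
      simpa [hupd, hβd] using h2
    have h3 := h1.const_sub (y a)
    refine h3.congr_of_eventuallyEq (Filter.Eventually.of_forall fun x => ?_)
    simp only [hXTv]
  -- full first part
  have hf1 : HasDerivAt (fun x => ((1 : ℝ) / n) *
      ∑ a, (y a - (X * Tmat g (Function.update t j x)).mulVec
        (betaT X g y (Function.update t j x)) a) ^ 2)
      (((1 : ℝ) / n) * ∑ a, (2 * (y a - (X * Tmat g t).mulVec β a) ^ 1 * r' a)) (t j) := by
    apply HasDerivAt.const_mul
    apply HasDerivAt.fun_sum
    intro a _
    have h1 := (hres a).fun_pow 2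
    simpa [hupd, hβd] using h1
  -- penalty part
  have hf2 : HasDerivAt (fun x => lam * ∑ j' : Fin J,
      Real.sqrt ((univ.filter fun i : Fin p => g i = j').card) * Function.update t j x j')
      (lam * Real.sqrt ((univ.filter fun i : Fin p => g i = j).card)) (t j) := by
    have h1 : HasDerivAt (fun x => ∑ j' : Fin J,
        Real.sqrt ((univ.filter fun i : Fin p => g i = j').card) * Function.update t j x j')
        (∑ j' : Fin J, if j' = j then
          Real.sqrt ((univ.filter fun i : Fin p => g i = j').card) else 0) (t j) := by
      apply HasDerivAt.fun_sum
      intro j' _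
      by_cases h : j' = j
      · subst h
        simp only [if_pos rfl]
        have : (fun x => Real.sqrt ((univ.filter fun i : Fin p => g i = j').card) *
            Function.update t j' x j') = fun x =>
            Real.sqrt ((univ.filter fun i : Fin p => g i = j').card) * x := by
          funext x; rw [Function.update_self]
        rw [this]
        simpa using (hasDerivAt_id (t j')).const_mul
          (Real.sqrt ((univ.filter fun i : Fin p => g i = j').card))
      · simp only [if_neg h]
        have : (fun x => Real.sqrt ((univ.filter fun i : Fin p => g i = j').card) *
            Function.update t j x j') = fun _ =>
            Real.sqrt ((univ.filter fun i : Fin p => g i = j').card) * t j' := by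
          funext x; rw [Function.update_of_ne h]
        rw [this]; exact hasDerivAt_const _ _
    have h2 := h1.const_mul lam
    simpa [Finset.sum_ite_eq' univ j] using h2
  have htotal := hf1.add hf2
  refine htotal.congr_deriv ?_
  have hkey : ((1 : ℝ) / n) * ∑ a, (2 * (y a - (X * Tmat g t).mulVec β a) ^ 1 * r' a) =
      2 * ((∑ i ∈ univ.filter fun i : Fin p => g i = j,
              betaT X g y t i * (aT X g y t i - dT X g y t i)) -
            ∑ i ∈ univ.filter fun i : Fin p => g i = j,
              bT X g y t i * cT X g y t i) := by
    have hn' : (n : ℝ) ≠ 0 := Nat.cast_ne_zero.mpr hn.ne'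
    set η : Fin p → ℝ := etaT X g y t with hηd
    set av : Fin p → ℝ := aT X g y t with havd
    set bv : Fin p → ℝ := bT X g y t with hbvd
    set cv : Fin p → ℝ := cT X g y t with hcvd
    set dv : Fin p → ℝ := dT X g y t with hdvd
    set φ : Fin p → ℝ := fun i => e i * β i + t (g i) * β' i with hφd
    set ta : Fin p → ℝ := fun i => t (g i) * av i with htad
    set tc : Fin p → ℝ := fun i => t (g i) * cv i with htcd
    set resid : Fin n → ℝ := y - X.mulVec η with hresd
    have hTsym : (Tmat g t)ᵀ = Tmat g t := by rw [Tmat, Matrix.diagonal_transpose]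
    have hZsym : Zᵀ = Z := by
      rw [hZ, Zmat, Matrix.transpose_sub, Matrix.transpose_smul, Matrix.transpose_mul,
        Matrix.transpose_transpose, Matrix.transpose_one]
    have hLsym : (Lmat X g t)ᵀ = Lmat X g t := by
      rw [Lmat, Matrix.transpose_add, Matrix.transpose_one, Matrix.transpose_mul,
        Matrix.transpose_mul, hTsym, ← hZ, hZsym, Matrix.mul_assoc]
    have hInvsym : Invᵀ = Inv := by rw [hInv, Matrix.transpose_nonsing_inv, hLsym]
    have hηe : ∀ k, η k = t (g k) * β k := by
      intro k
      rw [hηd, etaT, hβd]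
      simp [Tmat, Matrix.mulVec_diagonal]
    have hβv : β = Inv.mulVec v₀ := by rw [hβd, betaT, ← hInv, ← hv₀]
    have hcv : cv = Inv.mulVec ta := by
      rw [hcvd, cT, ← hInv, htad, havd]
    have hdv : dv = Z.mulVec tc := by
      rw [hdvd, dT, ← hZ, htcd, hcvd]
    have hZη : Z.mulVec η = ((1 : ℝ) / n) • ((Xᵀ * X).mulVec η) - η := by
      rw [hZ, Zmat, Matrix.sub_mulVec, Matrix.smul_mulVec, Matrix.one_mulVec]
    have hav1 : av = ((1 : ℝ) / n) • ((Xᵀ * X).mulVec η) - ((1 : ℝ) / n) • w := by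
      rw [havd, aT, ← hηd, hw]
    have hbv : bv = Z.mulVec η - ((1 : ℝ) / n) • w := by
      have h0 : bv = av - η := by rw [hbvd, bT, ← havd, ← hηd]
      rw [h0, hav1, hZη]
      abel
    have hXtresid : Xᵀ.mulVec resid = -((n : ℝ) • av) := by
      rw [hresd, Matrix.mulVec_sub, Matrix.mulVec_mulVec, ← hw, hav1, smul_sub,
        smul_smul, smul_smul]
      rw [mul_one_div_cancel hn', one_smul, one_smul, neg_sub]
    have hefil : ∀ u : Fin p → ℝ, ∑ i, e i * u i =
        ∑ i ∈ univ.filter (fun i : Fin p => g i = j), u i := by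
      intro u
      rw [Finset.sum_filter]
      apply Finset.sum_congr rfl
      intro i _
      by_cases h : g i = j <;> simp [he, h]
    have hr'e : ∀ a, r' a = -((X.mulVec φ) a) := by
      intro a
      rw [hr']
      simp [Matrix.mulVec, dotProduct, hφd]
    have hresapp : ∀ a, y a - ((X * Tmat g t).mulVec β) a = resid a := by
      intro a
      rw [hresd, ← Matrix.mulVec_mulVec, hηd, etaT, ← hβd]
      simp
    have hB : resid ⬝ᵥ (X.mulVec φ) = (Xᵀ.mulVec resid) ⬝ᵥ φ := by
      have h := transpose_dot_swap Xᵀ resid φ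
      rwa [Matrix.transpose_transpose] at h
    have step1 : ((1 : ℝ) / n) * ∑ a, (2 * (y a - (X * Tmat g t).mulVec β a) ^ 1 * r' a) =
        2 * (av ⬝ᵥ φ) := by
      have h1 : ((1 : ℝ) / n) * ∑ a, (2 * (y a - (X * Tmat g t).mulVec β a) ^ 1 * r' a) =
          -(2 / n) * (resid ⬝ᵥ X.mulVec φ) := by
        rw [dotProduct, Finset.mul_sum, Finset.mul_sum]
        apply Finset.sum_congr rfl
        intro a _
        rw [hr'e a, hresapp a]
        ring
      rw [h1, hB, hXtresid, neg_dotProduct, smul_dotProduct]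
      field_simp
      ring
    have step2 : av ⬝ᵥ φ =
        (∑ i ∈ univ.filter (fun i : Fin p => g i = j), β i * av i) + ta ⬝ᵥ β' := by
      have h1 : av ⬝ᵥ φ = ∑ i, (e i * (β i * av i) + ta i * β' i) := by
        simp only [dotProduct, hφd, htad]
        apply Finset.sum_congr rfl
        intro i _
        ring
      rw [h1, Finset.sum_add_distrib, hefil]
      rfl
    have hswapInv : ∀ z : Fin p → ℝ, ta ⬝ᵥ Inv.mulVec z = cv ⬝ᵥ z := by
      intro z
      rw [symm_dot_swap Inv hInvsym, ← hcv]
    have step3 : ta ⬝ᵥ β' = -(cv ⬝ᵥ (Lp.mulVec β)) + cv ⬝ᵥ v1 := by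
      have h4 : Mder.mulVec v₀ = -(Inv.mulVec (Lp.mulVec β)) := by
        rw [hMder, Matrix.neg_mulVec, ← Matrix.mulVec_mulVec, ← Matrix.mulVec_mulVec, ← hβv]
      rw [hβ'd, dotProduct_add, h4, dotProduct_neg, hswapInv, hswapInv]
    have step4 : cv ⬝ᵥ (Lp.mulVec β) =
        (∑ i ∈ univ.filter (fun i : Fin p => g i = j), cv i * (Z.mulVec η) i) +
          ∑ i ∈ univ.filter (fun i : Fin p => g i = j), β i * dv i := by
      have hLpβ : ∀ i, (Lp.mulVec β) i =
          e i * (Z.mulVec η) i + t (g i) * ((Z.mulVec fun k => e k * β k) i) := by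
        intro i
        simp only [Matrix.mulVec, dotProduct, hLp, Matrix.of_apply]
        rw [Finset.mul_sum, Finset.mul_sum, ← Finset.sum_add_distrib]
        apply Finset.sum_congr rfl
        intro k _
        rw [hηe k]
        ring
      have h1 : cv ⬝ᵥ (Lp.mulVec β) =
          ∑ i, (e i * (cv i * (Z.mulVec η) i) + tc i * (Z.mulVec fun k => e k * β k) i) := by
        simp only [dotProduct]
        apply Finset.sum_congr rfl
        intro i _
        rw [hLpβ i, htcd]
        ring
      rw [h1, Finset.sum_add_distrib, hefil]
      congr 1
      have h2 : ∑ i, tc i * (Z.mulVec fun k => e k * β k) i =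
          tc ⬝ᵥ (Z.mulVec fun k => e k * β k) := rfl
      rw [h2, symm_dot_swap Z hZsym, ← hdv]
      have h3 : dv ⬝ᵥ (fun k => e k * β k) = ∑ k, e k * (β k * dv k) := by
        simp only [dotProduct]
        apply Finset.sum_congr rfl
        intro k _
        ring
      rw [h3, hefil]
    have step5 : cv ⬝ᵥ v1 =
        ∑ i ∈ univ.filter (fun i : Fin p => g i = j), cv i * (((1 : ℝ) / n) * w i) := by
      have h1 : cv ⬝ᵥ v1 = ∑ l, e l * (cv l * (((1 : ℝ) / n) * w l)) := by
        simp only [dotProduct, hv1]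
        apply Finset.sum_congr rfl
        intro l _
        ring
      rw [h1, hefil]
    have step6 : (∑ i ∈ univ.filter (fun i : Fin p => g i = j),
          cv i * (((1 : ℝ) / n) * w i)) -
        ∑ i ∈ univ.filter (fun i : Fin p => g i = j), cv i * (Z.mulVec η) i =
        -∑ i ∈ univ.filter (fun i : Fin p => g i = j), bv i * cv i := by
      rw [← Finset.sum_sub_distrib, ← Finset.sum_neg_distrib]
      apply Finset.sum_congr rfl
      intro i _
      have h1 : bv i = (Z.mulVec η) i - ((1 : ℝ) / n) * w i := by
        rw [hbv]
        simp
      rw [h1]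
      ring
    rw [step1, step2, step3, step4, step5]
    have hR : ∑ i ∈ univ.filter (fun i : Fin p => g i = j), β i * (av i - dv i) =
        (∑ i ∈ univ.filter (fun i : Fin p => g i = j), β i * av i) -
          ∑ i ∈ univ.filter (fun i : Fin p => g i = j), β i * dv i := by
      rw [← Finset.sum_sub_distrib]
      exact Finset.sum_congr rfl fun i _ => by ring
    rw [hR]
    linarith [step6]
  rw [hkey]
end
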